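/- Let W₁, …, W_k be closed half-spaces of ℝ^ℓ bounded by affine hyperplanes H₁, …, H_k, and let Q = W₁ ∩ … ∩ W_k. Fix z ∈ ℝ^ℓ and let (x_m)_{m∈ℕ} be a sequence of points of ℝ^ℓ \ Q converging to a point x_∞ with x_∞ ∈ H_i for all i. Assume that for each m ∈ ℕ ∪ {∞} there exists a point y_m ∈ (x_m + ℝ₋z) ∩ ∂Q at minimal distance from x_m, where ℝ₋ denotes the set of nonpositive real numbers and ∂Q is the topological boundary of Q. Then some subsequence of (y_m)_{m∈ℕ} converges to x_∞. -/

import Mathlib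

open Filter

lemma aux_closest (l k : ℕ) (ψ : Fin k → ((Fin l → ℝ) →ₗ[ℝ] ℝ)) (d : Fin k → ℝ)
    (Q : Set (Fin l → ℝ)) (hQ : Q = {p | ∀ i, ψ i p ≤ d i})
    (z xm : Fin l → ℝ) (hx : xm ∉ Q)
    (E : ℝ) (hE0 : 0 ≤ E) (hE : ∀ i, |d i - ψ i xm| / |ψ i z| ≤ E)
    (ym : Fin l → ℝ) (t : ℝ) (ht : t ≤ 0) (hym : ym = xm + t • z)
    (hymF : ym ∈ frontier Q)
    (hmin : ∀ w ∈ {p | ∃ s : ℝ, s ≤ 0 ∧ p = xm + s • z} ∩ frontier Q,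
      dist xm ym ≤ dist xm w) :
    dist xm ym ≤ E * ‖z‖ := by
  have hQc : IsClosed Q := by
    have h1 : Q = ⋂ i, {p : Fin l → ℝ | ψ i p ≤ d i} := by
      rw [hQ]; ext p; simp
    rw [h1]
    exact isClosed_iInter fun i =>
      isClosed_le (ψ i).continuous_of_finiteDimensional continuous_const
  have hymQ : ym ∈ Q := by
    have := frontier_subset_closure hymF
    rwa [hQc.closure_eq] at this
  have hmap : Continuous fun s : ℝ => xm + s • z := by continuity
  set S : Set ℝ := Set.Iic 0 ∩ (fun s : ℝ => xm + s • z) ⁻¹' Q with hSdef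
  have htS : t ∈ S := ⟨ht, by simpa [← hym] using hymQ⟩
  have hSc : IsClosed S := isClosed_Iic.inter (hQc.preimage hmap)
  have hSbdd : BddAbove S := ⟨0, fun s hs => hs.1⟩
  have hstar : sSup S ∈ S := hSc.csSup_mem ⟨t, htS⟩ hSbdd
  set τ : ℝ := sSup S with hτ
  have hτ0 : τ ≤ 0 := hstar.1
  have hqQ : xm + τ • z ∈ Q := hstar.2
  have hτne : τ ≠ 0 := by
    intro h
    apply hx
    simpa [h] using hqQ
  have hτlt : τ < 0 := lt_of_le_of_ne hτ0 hτne
  -- distance computation helper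
  have hdist : ∀ a b : ℝ, dist (xm + a • z) (xm + b • z) = |a - b| * ‖z‖ := by
    intro a b
    rw [dist_add_left, dist_eq_norm, ← sub_smul, norm_smul, Real.norm_eq_abs]
  -- the entry point is on the frontier
  have hqF : xm + τ • z ∈ frontier Q := by
    rw [frontier_eq_closure_inter_closure]
    refine ⟨subset_closure hqQ, ?_⟩
    rw [Metric.mem_closure_iff]
    intro ε hε
    have hz1 : (0:ℝ) < ‖z‖ + 1 := by positivity
    set δ : ℝ := ε / (‖z‖ + 1) with hδ
    have hδ0 : 0 < δ := by positivity
    obtain ⟨s', hs1, hs2⟩ := exists_between (show τ < min 0 (τ + δ) by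
      simp [lt_min_iff]; constructor <;> linarith)
    have hs'0 : s' ≤ 0 := le_of_lt (lt_of_lt_of_le hs2 (min_le_left _ _))
    have hs'S : s' ∉ S := fun h => absurd (le_csSup hSbdd h) (not_le.mpr hs1)
    have hs'Q : xm + s' • z ∉ Q := fun h => hs'S ⟨hs'0, h⟩
    refine ⟨xm + s' • z, hs'Q, ?_⟩
    rw [hdist]
    have h1 : |τ - s'| = s' - τ := by rw [abs_sub_comm]; exact abs_of_pos (by linarith)
    rw [h1]
    have h2 : s' - τ < δ := by
      have := lt_of_lt_of_le hs2 (min_le_right _ _); linarith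
    have h3 : (s' - τ) * ‖z‖ ≤ (s' - τ) * (‖z‖ + 1) := by nlinarith [norm_nonneg z, hs1]
    have h4 : (s' - τ) * (‖z‖ + 1) < δ * (‖z‖ + 1) := by nlinarith
    have h5 : δ * (‖z‖ + 1) = ε := by rw [hδ]; field_simp
    linarith
  -- lower bound on τ
  have hsmem : max t (-E) ∈ S := by
    constructor
    · exact max_le ht (by linarith)
    · rw [hQ]
      intro i
      have hyQi : ψ i xm + t * ψ i z ≤ d i := by
        have h1 : ψ i ym ≤ d i := (hQ ▸ hymQ) i
        rw [hym] at h1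
        simpa [map_add, map_smul, smul_eq_mul] using h1
      show ψ i (xm + max t (-E) • z) ≤ d i
      rw [map_add, map_smul, smul_eq_mul]
      rcases lt_trichotomy (ψ i z) 0 with hlt | heq | hgt
      · nlinarith [le_max_left t (-E)]
      · rw [heq]; simpa [heq] using hyQi
      · have habs : |d i - ψ i xm| ≤ E * |ψ i z| :=
          (div_le_iff₀ (abs_pos.2 hgt.ne')).mp (hE i)
        rw [abs_of_pos hgt] at habs
        have h2 := abs_le.mp habs
        rcases max_choice t (-E) with hs | hs <;> rw [hs]
        · exact hyQi
        · nlinarith [h2.1]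
  have hτge : -E ≤ τ := le_trans (le_max_right t (-E)) (le_csSup hSbdd hsmem)
  have hfin := hmin (xm + τ • z) ⟨⟨τ, hτ0, rfl⟩, hqF⟩
  have h6 : dist xm (xm + τ • z) = -τ * ‖z‖ := by
    have := hdist 0 τ
    simpa [abs_of_neg hτlt, abs_sub_comm] using (by
      simpa using this : dist xm (xm + τ • z) = |0 - τ| * ‖z‖)
  rw [h6] at hfin
  have : -τ * ‖z‖ ≤ E * ‖z‖ :=
    mul_le_mul_of_nonneg_right (by linarith) (norm_nonneg z)
  linarith



/-- **Closest boundary points along a fixed direction converge to the limit.**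
Let `W₁, …, W_k` be closed half-spaces of `ℝˡ` bounded by affine hyperplanes
`Hᵢ = {x : φᵢ x = cᵢ}`, and `Q = W₁ ∩ … ∩ W_k`. Fix `z ∈ ℝˡ` and let `xₘ ∈ ℝˡ \ Q`
converge to `x_∞` with `x_∞ ∈ Hᵢ` for all `i`. Assume for each `m ∈ ℕ ∪ {∞}` there is a
point `yₘ ∈ (xₘ + ℝ₋z) ∩ ∂Q` at minimal distance from `xₘ`. Then some subsequence of
`(yₘ)` converges to `x_∞`. -/
theorem subseq_of_closest_boundary_points_tendsto
    (l k : ℕ) (φ : Fin k → ((Fin l → ℝ) →ₗ[ℝ] ℝ)) (hφ : ∀ i, φ i ≠ 0)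
    (c : Fin k → ℝ) (σ : Fin k → Bool)
    (W : Fin k → Set (Fin l → ℝ))
    (hW : ∀ i, W i = if σ i then {x | φ i x ≤ c i} else {x | c i ≤ φ i x})
    (Q : Set (Fin l → ℝ)) (hQ : Q = ⋂ i, W i)
    (z : Fin l → ℝ)
    (x : ℕ → Fin l → ℝ) (hxQ : ∀ m, x m ∉ Q)
    (xlim : Fin l → ℝ) (hlim : Filter.Tendsto x Filter.atTop (nhds xlim))
    (hxH : ∀ i, φ i xlim = c i)
    (y : ℕ → Fin l → ℝ) (ylim : Fin l → ℝ)
    (hy : ∀ m, y m ∈ {p | ∃ t : ℝ, t ≤ 0 ∧ p = x m + t • z} ∩ frontier Q ∧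
      ∀ w ∈ {p | ∃ t : ℝ, t ≤ 0 ∧ p = x m + t • z} ∩ frontier Q,
        dist (x m) (y m) ≤ dist (x m) w)
    (hylim : ylim ∈ {p | ∃ t : ℝ, t ≤ 0 ∧ p = xlim + t • z} ∩ frontier Q ∧
      ∀ w ∈ {p | ∃ t : ℝ, t ≤ 0 ∧ p = xlim + t • z} ∩ frontier Q,
        dist xlim ylim ≤ dist xlim w) :
    ∃ g : ℕ → ℕ, StrictMono g ∧
      Filter.Tendsto (fun j => y (g j)) Filter.atTop (nhds xlim) := by
  refine ⟨id, strictMono_id, ?_⟩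
  set ψ : Fin k → ((Fin l → ℝ) →ₗ[ℝ] ℝ) := fun i => if σ i then φ i else -(φ i) with hψ
  set d : Fin k → ℝ := fun i => if σ i then c i else -(c i) with hd
  have hQ' : Q = {p | ∀ i, ψ i p ≤ d i} := by
    rw [hQ]; ext p
    simp only [Set.mem_iInter, Set.mem_setOf_eq]
    refine forall_congr' fun i => ?_
    rw [hW i]
    by_cases h : σ i <;> simp [ψ, d, h, neg_le_neg_iff]
  set E : ℕ → ℝ := fun m => ∑ i, |d i - ψ i (x m)| / |ψ i z| with hE
  have hE0 : ∀ m, 0 ≤ E m := fun m =>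
    Finset.sum_nonneg fun i _ => div_nonneg (abs_nonneg _) (abs_nonneg _)
  have hEbd : ∀ m i, |d i - ψ i (x m)| / |ψ i z| ≤ E m := by
    intro m i
    rw [hE]
    exact Finset.single_le_sum (f := fun j => |d j - ψ j (x m)| / |ψ j z|)
      (fun j _ => div_nonneg (abs_nonneg _) (abs_nonneg _)) (Finset.mem_univ i)
  have hElim : Tendsto E atTop (nhds 0) := by
    have hterm : ∀ i : Fin k, Tendsto (fun m => |d i - ψ i (x m)| / |ψ i z|)
        atTop (nhds 0) := by
      intro i
      have h1 : Tendsto (fun m => ψ i (x m)) atTop (nhds (ψ i xlim)) :=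
        ((ψ i).continuous_of_finiteDimensional.tendsto _).comp hlim
      have h2 : ψ i xlim = d i := by
        by_cases h : σ i <;> simp [ψ, d, h, hxH i]
      have h3 : Tendsto (fun m => |d i - ψ i (x m)| / |ψ i z|) atTop
          (nhds (|d i - ψ i xlim| / |ψ i z|)) :=
        ((tendsto_const_nhds.sub h1).abs).div_const _
      simpa [h2] using h3
    have := tendsto_finset_sum Finset.univ (fun i (_ : i ∈ Finset.univ) => hterm i)
    simpa using this
  have hbd : ∀ m, dist (x m) (y m) ≤ E m * ‖z‖ := by
    intro m
    obtain ⟨⟨⟨t, ht0, hyt⟩, hfr⟩, hmin⟩ := hy m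
    exact aux_closest l k ψ d Q hQ' z (x m) (hxQ m) (E m) (hE0 m) (hEbd m)
      (y m) t ht0 hyt hfr hmin
  rw [tendsto_iff_dist_tendsto_zero]
  apply squeeze_zero (fun m => dist_nonneg)
    (g := fun m => E m * ‖z‖ + dist (x m) xlim)
  · intro m
    calc dist (y (id m)) xlim ≤ dist (y m) (x m) + dist (x m) xlim := dist_triangle _ _ _
    _ ≤ E m * ‖z‖ + dist (x m) xlim := by
        rw [dist_comm]; exact add_le_add_left (hbd m) _
  · have h1 := hElim.mul_const ‖z‖
    have h2 := tendsto_iff_dist_tendsto_zero.mp hlim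
    simpa using h1.add h2
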